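/- The coinvariant group ℓ∞(ℤ,ℤ)_S is divisible: for every class x ∈ ℓ∞(ℤ,ℤ)_S and every positive integer n, there exists y ∈ ℓ∞(ℤ,ℤ)_S with n·y = x. Consequently ℓ∞(ℤ,ℤ)_S admits the structure of a ℚ-vector space. -/

import Mathlib

/-- The abelian group `ℓ∞(ℤ,ℤ)` of bounded integer sequences. -/
def linfZ : AddSubgroup (ℤ → ℤ) where
  carrier := {a | ∃ C : ℤ, ∀ i, |a i| ≤ C}
  zero_mem' := ⟨0, fun i => by simp⟩
  add_mem' := by
    rintro a b ⟨C, hC⟩ ⟨D, hD⟩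
    exact ⟨C + D, fun i => (abs_add_le _ _).trans (add_le_add (hC i) (hD i))⟩
  neg_mem' := by
    rintro a ⟨C, hC⟩
    exact ⟨C, fun i => by simpa using hC i⟩

/-- The shift operator `(Sa)_i = a_{i+1}` on `ℓ∞(ℤ,ℤ)`. -/
def shiftS : linfZ →+ linfZ where
  toFun a := ⟨fun i => a.1 (i + 1), by obtain ⟨C, hC⟩ := a.2; exact ⟨C, fun i => hC (i + 1)⟩⟩
  map_zero' := rfl
  map_add' _ _ := rfl

/-- The subgroup `(1 - S) ℓ∞(ℤ,ℤ) = {a - Sa}`. -/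
def coinvSub : AddSubgroup linfZ := (AddMonoidHom.id linfZ - shiftS).range

/-- The coinvariant group `ℓ∞(ℤ,ℤ)_S`. -/
abbrev linfZS := linfZ ⧸ coinvSub

/-- Two-sided partial sums of a sequence. -/
private def psum (a : ℤ → ℤ) (i : ℤ) : ℤ :=
  (Finset.range i.toNat).sum (fun j => a j) -
    (Finset.range (-i).toNat).sum (fun j => a (-(j + 1)))

private lemma psum_succ (a : ℤ → ℤ) (i : ℤ) : psum a (i + 1) = psum a i + a i := by
  unfold psum
  rcases le_or_gt 0 i with h | h
  · have h1 : (i + 1).toNat = i.toNat + 1 := by omega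
    have h2 : (-i).toNat = 0 := by omega
    have h3 : (-(i + 1)).toNat = 0 := by omega
    rw [h1, h2, h3, Finset.sum_range_succ]
    have h4 : (i.toNat : ℤ) = i := by omega
    rw [h4]; ring
  · have h1 : (i + 1).toNat = 0 := by omega
    have h2 : i.toNat = 0 := by omega
    have h3 : (-i).toNat = (-(i + 1)).toNat + 1 := by omega
    rw [h1, h2, h3, Finset.sum_range_succ]
    have h4 : -(((-(i + 1)).toNat : ℤ) + 1) = i := by omega
    rw [h4]; ring

private lemma mem_coinvSub {a : linfZ} (c : linfZ)
    (h : ∀ i, c.1 i - c.1 (i + 1) = a.1 i) : a ∈ coinvSub := by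
  refine ⟨c, ?_⟩
  apply Subtype.ext
  funext i
  exact h i

private lemma of_mem_coinvSub {a : linfZ} (h : a ∈ coinvSub) :
    ∃ c : linfZ, ∀ i, c.1 i - c.1 (i + 1) = a.1 i := by
  obtain ⟨c, hc⟩ := h
  refine ⟨c, fun i => ?_⟩
  rw [← hc]; rfl

/-- Divisibility of the coinvariants. -/
private lemma linfZS_div (x : linfZS) (n : ℕ) (hn : 0 < n) : ∃ y : linfZS, n • y = x := by
  obtain ⟨a, rfl⟩ := QuotientAddGroup.mk'_surjective coinvSub x
  obtain ⟨C, hC⟩ := a.2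
  set s := psum a.1 with hs_def
  have hs : ∀ i, s (i + 1) = s i + a.1 i := psum_succ a.1
  have hnz : (n : ℤ) ≠ 0 := by exact_mod_cast hn.ne'
  have hnpos : (0 : ℤ) < n := by exact_mod_cast hn
  -- key computation
  have key : ∀ i : ℤ, (n : ℤ) * (s (i + 1) / n) - (n : ℤ) * (s i / n)
      = a.1 i + s i % n - s (i + 1) % n := by
    intro i
    have h1 := Int.mul_ediv_add_emod (s i) n
    have h2 := Int.mul_ediv_add_emod (s (i + 1)) n
    have h3 := hs i
    linarith
  have memod : ∀ m : ℤ, 0 ≤ m % n ∧ m % n < n := fun m =>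
    ⟨Int.emod_nonneg m hnz, Int.emod_lt_of_pos m hnpos⟩
  have bbound : ∀ i : ℤ, |s (i + 1) / n - s i / n| ≤ C + n := by
    intro i
    have habs : |(n : ℤ) * (s (i + 1) / n - s i / n)| ≤ C + n := by
      rw [mul_sub, abs_le]
      have h4 := key i
      have h5 := abs_le.mp (hC i)
      have h6 := memod (s i)
      have h7 := memod (s (i + 1))
      constructor <;> linarith [h5.1, h5.2, h6.1, h6.2, h7.1, h7.2]
    calc |s (i + 1) / n - s i / n| ≤ |(n : ℤ)| * |s (i + 1) / n - s i / n| := by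
          apply le_mul_of_one_le_left (abs_nonneg _)
          rw [abs_of_pos hnpos]; exact_mod_cast hn
      _ = |(n : ℤ) * (s (i + 1) / n - s i / n)| := (abs_mul _ _).symm
      _ ≤ C + n := habs
  refine ⟨QuotientAddGroup.mk' coinvSub ⟨fun i => s (i + 1) / n - s i / n, ⟨C + n, bbound⟩⟩, ?_⟩
  rw [← map_nsmul]
  rw [QuotientAddGroup.mk'_eq_mk']
  set b : linfZ := ⟨fun i => s (i + 1) / n - s i / n, ⟨C + n, bbound⟩⟩ with hb
  refine ⟨a - n • b, ?_, by abel⟩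
  have cbound : ∀ i : ℤ, |s i % n| ≤ (n : ℤ) := by
    intro i
    have h6 := memod (s i)
    rw [abs_le]; constructor <;> linarith [h6.1, h6.2]
  apply mem_coinvSub (⟨fun i => -(s i % n), ⟨n, fun i => by simpa using cbound i⟩⟩ : linfZ)
  intro i
  have hkey := key i
  have hval : (a - n • b).1 i = a.1 i - n * b.1 i := by
    simp
  rw [hval, hb]
  dsimp only
  linarith

/-- Torsion-freeness of the coinvariants. -/
private lemma linfZS_tf (x : linfZS) (n : ℕ) (hn : 0 < n) (h : n • x = 0) : x = 0 := by
  obtain ⟨a, rfl⟩ := QuotientAddGroup.mk'_surjective coinvSub x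
  rw [← map_nsmul] at h
  have hmem : n • a ∈ coinvSub := by
    rwa [QuotientAddGroup.mk'_apply, QuotientAddGroup.eq_zero_iff] at h
  obtain ⟨c, hc⟩ := of_mem_coinvSub hmem
  have hc' : ∀ i, c.1 i - c.1 (i + 1) = n * a.1 i := by
    intro i
    rw [hc i]; simp
  have hnz : (n : ℤ) ≠ 0 := by exact_mod_cast hn.ne'
  obtain ⟨D, hD⟩ := c.2
  have dbound : ∀ i : ℤ, |c.1 i / n| ≤ D :=
    fun i => le_trans (Int.abs_ediv_le_abs _ _) (hD i)
  rw [QuotientAddGroup.mk'_apply, QuotientAddGroup.eq_zero_iff]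
  apply mem_coinvSub (⟨fun i => c.1 i / n, ⟨D, dbound⟩⟩ : linfZ)
  intro i
  dsimp only
  have hmod : c.1 (i + 1) % n = c.1 i % n := by
    have : c.1 (i + 1) = c.1 i - (n : ℤ) * a.1 i := by linarith [hc' i]
    rw [this, Int.sub_emod, Int.mul_emod_right, sub_zero, Int.emod_emod_of_dvd _ (dvd_refl _)]
  have h1 := Int.mul_ediv_add_emod (c.1 i) n
  have h2 := Int.mul_ediv_add_emod (c.1 (i + 1)) n
  have : (n : ℤ) * (c.1 i / n - c.1 (i + 1) / n) = (n : ℤ) * a.1 i := by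
    rw [mul_sub]; linarith [hc' i]
  exact mul_left_cancel₀ hnz this

private noncomputable def qModule : Module ℚ linfZS := by
  have cancel : ∀ (m : ℤ), 0 < m → ∀ y z : linfZS, m • y = m • z → y = z := by
    intro m hm y z h
    have h0 : m • (y - z) = 0 := by rw [zsmul_sub, h, sub_self]
    have h1 : m.toNat • (y - z) = 0 := by
      rw [← natCast_zsmul, Int.toNat_of_nonneg hm.le, h0]
    have := linfZS_tf (y - z) m.toNat (by omega) h1
    rwa [sub_eq_zero] at this
  have hdiv := fun (q : ℚ) (x : linfZS) => linfZS_div (q.num • x) q.den q.pos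
  choose f hf using hdiv
  have hfZ : ∀ (q : ℚ) (x : linfZS), (q.den : ℤ) • f q x = q.num • x := by
    intro q x
    rw [natCast_zsmul, hf]
  letI : SMul ℚ linfZS := ⟨f⟩
  have denpos : ∀ q : ℚ, (0 : ℤ) < q.den := fun q => by exact_mod_cast q.pos
  refine Module.ofMinimalAxioms ?_ ?_ ?_ ?_
  · intro q x y
    apply cancel (q.den : ℤ) (denpos q)
    show (q.den : ℤ) • f q (x + y) = (q.den : ℤ) • (f q x + f q y)
    rw [hfZ]
    conv_rhs => rw [zsmul_add, hfZ, hfZ]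
    rw [zsmul_add]
  · intro p q x
    apply cancel ((p.den : ℤ) * q.den * (p + q).den)
      (mul_pos (mul_pos (denpos p) (denpos q)) (denpos (p + q)))
    show ((p.den : ℤ) * q.den * (p + q).den) • f (p + q) x
        = ((p.den : ℤ) * q.den * (p + q).den) • (f p x + f q x)
    have e1 : ((p.den : ℤ) * q.den * (p + q).den) • f (p + q) x
        = ((p.den : ℤ) * q.den * (p + q).num) • x := by
      rw [mul_smul, hfZ, ← mul_smul]
    have t1 : ((p.den : ℤ) * q.den * (p + q).den) • f p x
        = ((q.den : ℤ) * (p + q).den * p.num) • x := by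
      rw [show ((p.den : ℤ) * q.den * (p + q).den) = ((q.den : ℤ) * (p + q).den) * p.den by ring,
        mul_smul, hfZ, ← mul_smul]
    have t2 : ((p.den : ℤ) * q.den * (p + q).den) • f q x
        = ((p.den : ℤ) * (p + q).den * q.num) • x := by
      rw [show ((p.den : ℤ) * q.den * (p + q).den) = ((p.den : ℤ) * (p + q).den) * q.den by ring,
        mul_smul, hfZ, ← mul_smul]
    rw [e1, zsmul_add, t1, t2, ← add_zsmul]
    congr 1
    linear_combination Rat.add_num_den' p q
  · intro p q x
    apply cancel ((p.den : ℤ) * q.den * (p * q).den)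
      (mul_pos (mul_pos (denpos p) (denpos q)) (denpos (p * q)))
    show ((p.den : ℤ) * q.den * (p * q).den) • f (p * q) x
        = ((p.den : ℤ) * q.den * (p * q).den) • f p (f q x)
    have e1 : ((p.den : ℤ) * q.den * (p * q).den) • f (p * q) x
        = ((p.den : ℤ) * q.den * (p * q).num) • x := by
      rw [mul_smul, hfZ, ← mul_smul]
    have e2 : ((p.den : ℤ) * q.den * (p * q).den) • f p (f q x)
        = (((p * q).den : ℤ) * p.num * q.num) • x := by
      rw [show ((p.den : ℤ) * q.den * (p * q).den) = (((p * q).den : ℤ) * q.den) * p.den by ring,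
        mul_smul, hfZ, ← mul_smul,
        show (((p * q).den : ℤ) * q.den) * p.num = (((p * q).den : ℤ) * p.num) * q.den by ring,
        mul_smul, hfZ, ← mul_smul]
    rw [e1, e2]
    congr 1
    linear_combination Rat.mul_num_den' p q
  · intro x
    apply cancel 1 one_pos
    show (1 : ℤ) • f 1 x = (1 : ℤ) • x
    have := hfZ 1 x
    simpa using this

/--  is divisible and admits the structure of a -vector space. -/
theorem linfZS_divisible_and_Q_vector_space :
    (∀ (x : linfZS) (n : ℕ), 0 < n → ∃ y : linfZS, n • y = x) ∧
    (∀ (x : linfZS) (n : ℕ), 0 < n → n • x = 0 → x = 0) ∧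
    Nonempty (Module ℚ linfZS) := by
  exact ⟨linfZS_div, linfZS_tf, ⟨qModule⟩⟩
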